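/- arXiv:2511.14517 — 2 statements merged into one kernel-verified Lean document; each statement's English description precedes it below -/
import Mathlib

section
/- With notation as in the SINR invariance, if W is scaled so that ‖W‖_F² = P, then the modified SINR γ̄_k(W) equals the true SINR γ_k(W) = Tr(H_k W E_k W^H) / (Tr(H_k W (I_K − E_k) W^H) + σ_k²). Consequently, maximizing the weighted sum rate Σ_k β_k log₂(1+γ̄_k) without the power constraint and then rescaling W to norm √P yields an optimal solution of the power-constrained weighted sum-rate problem. -/
open Matrix

/-- Frobenius norm squared of a complex matrix. -/
noncomputable def frobNormSq {m n : Type*} [Fintype m] [Fintype n]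
    (A : Matrix m n ℂ) : ℝ := ∑ i, ∑ j, ‖A i j‖ ^ 2

/-- Frobenius norm of a complex matrix. -/
noncomputable def frobNorm {m n : Type*} [Fintype m] [Fintype n]
    (A : Matrix m n ℂ) : ℝ := Real.sqrt (frobNormSq A)

/-- The modified SINR of user `k`, where the noise is scaled by ‖W‖_F²/P. -/
noncomputable def modSINR {L K : ℕ} (h : Fin K → Fin L → ℂ) (k : Fin K)
    (σsq : Fin K → ℝ) (P : ℝ) (W : Matrix (Fin L) (Fin K) ℂ) : ℝ :=
  (Matrix.trace (Matrix.vecMulVec (h k) (star (h k)) * W *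
      Matrix.single k k (1 : ℂ) * Wᴴ)).re /
    ((Matrix.trace (Matrix.vecMulVec (h k) (star (h k)) * W *
        ((1 : Matrix (Fin K) (Fin K) ℂ) - Matrix.single k k (1 : ℂ)) * Wᴴ)).re
      + σsq k / P * frobNormSq W)

/-- The true SINR of user `k` with fixed noise power `σ_k²`. -/
noncomputable def trueSINR {L K : ℕ} (h : Fin K → Fin L → ℂ) (k : Fin K)
    (σsq : Fin K → ℝ) (W : Matrix (Fin L) (Fin K) ℂ) : ℝ :=
  (Matrix.trace (Matrix.vecMulVec (h k) (star (h k)) * W *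
      Matrix.single k k (1 : ℂ) * Wᴴ)).re /
    ((Matrix.trace (Matrix.vecMulVec (h k) (star (h k)) * W *
        ((1 : Matrix (Fin K) (Fin K) ℂ) - Matrix.single k k (1 : ℂ)) * Wᴴ)).re
      + σsq k)

lemma frobNormSq_nonneg {m n : Type*} [Fintype m] [Fintype n]
    (A : Matrix m n ℂ) : 0 ≤ frobNormSq A := by
  apply Finset.sum_nonneg; intro i _; apply Finset.sum_nonneg; intro j _; positivity

lemma frobNormSq_pos {m n : Type*} [Fintype m] [Fintype n]
    {A : Matrix m n ℂ} (hA : A ≠ 0) : 0 < frobNormSq A := by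
  rcases (frobNormSq_nonneg A).lt_or_eq with hlt | heq
  · exact hlt
  · exfalso; apply hA
    ext i j
    have h1 : ∀ i ∈ Finset.univ, (0:ℝ) ≤ ∑ j, ‖A i j‖^2 := by
      intro i _; apply Finset.sum_nonneg; intro j _; positivity
    have h2 := (Finset.sum_eq_zero_iff_of_nonneg h1).mp heq.symm i (Finset.mem_univ i)
    have h3 : ∀ j ∈ Finset.univ, (0:ℝ) ≤ ‖A i j‖^2 := by intro j _; positivity
    have h4 := (Finset.sum_eq_zero_iff_of_nonneg h3).mp h2 j (Finset.mem_univ j)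
    simpa using pow_eq_zero_iff (n := 2) (by norm_num) |>.mp h4

lemma frobNormSq_smul {m n : Type*} [Fintype m] [Fintype n]
    (c : ℝ) (A : Matrix m n ℂ) : frobNormSq ((c : ℂ) • A) = c^2 * frobNormSq A := by
  simp only [frobNormSq, Matrix.smul_apply, smul_eq_mul, norm_mul, Complex.norm_real,
    mul_pow, Finset.mul_sum, sq_abs]
  simp [Real.norm_eq_abs, sq_abs]

lemma trace_smul_form {L K : ℕ} (H : Matrix (Fin L) (Fin L) ℂ)
    (E : Matrix (Fin K) (Fin K) ℂ) (W : Matrix (Fin L) (Fin K) ℂ) (c : ℝ) :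
    (Matrix.trace (H * ((c:ℂ) • W) * E * ((c:ℂ) • W)ᴴ)).re
      = c^2 * (Matrix.trace (H * W * E * Wᴴ)).re := by
  have : H * ((c:ℂ) • W) * E * ((c:ℂ) • W)ᴴ
      = (((c:ℝ)^2 : ℝ) : ℂ) • (H * W * E * Wᴴ) := by
    rw [conjTranspose_smul]
    simp only [Matrix.mul_smul, Matrix.smul_mul, smul_smul]
    congr 1
    simp [Complex.star_def, Complex.conj_ofReal]
    push_cast; ring
  rw [this, trace_smul, smul_eq_mul]
  exact Complex.re_ofReal_mul _ _


lemma modSINR_eq_on_sphere {L K : ℕ} (h : Fin K → Fin L → ℂ) (σsq : Fin K → ℝ)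
    (P : ℝ) (hP : 0 < P) (W : Matrix (Fin L) (Fin K) ℂ) (hW : frobNormSq W = P)
    (k : Fin K) : modSINR h k σsq P W = trueSINR h k σsq W := by
  unfold modSINR trueSINR
  rw [hW, div_mul_cancel₀ _ hP.ne']

lemma modSINR_smul {L K : ℕ} (h : Fin K → Fin L → ℂ) (σsq : Fin K → ℝ)
    (P : ℝ) (W : Matrix (Fin L) (Fin K) ℂ) (c : ℝ) (hc : c ≠ 0) (k : Fin K) :
    modSINR h k σsq P ((c : ℂ) • W) = modSINR h k σsq P W := by
  unfold modSINR
  rw [trace_smul_form, trace_smul_form, frobNormSq_smul]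
  have hc2 : (c : ℝ)^2 ≠ 0 := pow_ne_zero _ hc
  have : c ^ 2 * (Matrix.trace (Matrix.vecMulVec (h k) (star (h k)) * W *
        ((1 : Matrix (Fin K) (Fin K) ℂ) - Matrix.single k k (1 : ℂ)) * Wᴴ)).re
      + σsq k / P * (c ^ 2 * frobNormSq W) = c ^ 2 *
      ((Matrix.trace (Matrix.vecMulVec (h k) (star (h k)) * W *
        ((1 : Matrix (Fin K) (Fin K) ℂ) - Matrix.single k k (1 : ℂ)) * Wᴴ)).re
      + σsq k / P * frobNormSq W) := by ring
  rw [this, mul_div_mul_left _ _ hc2]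

/-- (a) on the power sphere ‖W‖_F² = P the modified SINR coincides with the
true SINR; (b) a maximizer of the unconstrained modified weighted sum rate, once
rescaled to transmit power P, is a maximizer of the power-constrained weighted
sum-rate problem. -/
theorem modSINR_eq_trueSINR_and_opt_transfer {L K : ℕ}
    (h : Fin K → Fin L → ℂ) (σsq : Fin K → ℝ) (hσ : ∀ k, 0 < σsq k)
    (P : ℝ) (hP : 0 < P)
    (β : Fin K → ℝ) (hβ : ∀ k, 0 ≤ β k) (hβsum : ∑ k, β k = 1) :
    (∀ W : Matrix (Fin L) (Fin K) ℂ, frobNormSq W = P →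
      ∀ k, modSINR h k σsq P W = trueSINR h k σsq W) ∧
    (∀ W₀ : Matrix (Fin L) (Fin K) ℂ, W₀ ≠ 0 →
      (∀ W : Matrix (Fin L) (Fin K) ℂ,
        ∑ k, β k * Real.logb 2 (1 + modSINR h k σsq P W) ≤
        ∑ k, β k * Real.logb 2 (1 + modSINR h k σsq P W₀)) →
      (frobNormSq (((Real.sqrt P / frobNorm W₀ : ℝ) : ℂ) • W₀) = P ∧
       ∀ W : Matrix (Fin L) (Fin K) ℂ, frobNormSq W = P →
        ∑ k, β k * Real.logb 2 (1 + trueSINR h k σsq W) ≤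
        ∑ k, β k * Real.logb 2
          (1 + trueSINR h k σsq (((Real.sqrt P / frobNorm W₀ : ℝ) : ℂ) • W₀)))) := by
  refine ⟨fun W hW k => modSINR_eq_on_sphere h σsq P hP W hW k, ?_⟩
  intro W₀ hW₀ hopt
  set c : ℝ := Real.sqrt P / frobNorm W₀ with hc
  have hn : 0 < frobNormSq W₀ := frobNormSq_pos hW₀
  have hfn : 0 < frobNorm W₀ := Real.sqrt_pos.mpr hn
  have hcpos : 0 < c := div_pos (Real.sqrt_pos.mpr hP) hfn
  have hsphere : frobNormSq ((c : ℂ) • W₀) = P := by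
    rw [frobNormSq_smul, hc, div_pow, Real.sq_sqrt hP.le, frobNorm,
      Real.sq_sqrt hn.le, div_mul_cancel₀ _ hn.ne']
  refine ⟨hsphere, fun W hW => ?_⟩
  calc ∑ k, β k * Real.logb 2 (1 + trueSINR h k σsq W)
      = ∑ k, β k * Real.logb 2 (1 + modSINR h k σsq P W) := by
        refine Finset.sum_congr rfl fun k _ => ?_
        rw [modSINR_eq_on_sphere h σsq P hP W hW k]
    _ ≤ ∑ k, β k * Real.logb 2 (1 + modSINR h k σsq P W₀) := hopt W
    _ = ∑ k, β k * Real.logb 2 (1 + trueSINR h k σsq ((c : ℂ) • W₀)) := by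
        refine Finset.sum_congr rfl fun k _ => ?_
        rw [← modSINR_eq_on_sphere h σsq P hP _ hsphere k,
          modSINR_smul h σsq P W₀ c hcpos.ne' k]
end

section
/- Lagrangian dual (concavity in the auxiliary variable): for fixed real numbers S ≥ 0 (signal power), I ≥ 0, σ² > 0 with SINR γ = S/(I + σ²), the function φ(ξ) = log(1+ξ) − ξ + (1+ξ)·S/(S + I + σ²) defined for ξ ≥ 0 is concave in ξ, is uniquely maximized at ξ* = γ = S/(I+σ²), and its maximum value equals log(1+γ). -/
open Real

/-- scalar Lagrangian dual transform. For `S ≥ 0`, `I ≥ 0`, `σ² > 0` and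
`γ = S/(I+σ²)`, the function `φ(ξ) = log(1+ξ) − ξ + (1+ξ)·S/(S+I+σ²)` is concave on
`ξ ≥ 0`, is uniquely maximized at `ξ* = γ`, and its maximum value is `log(1+γ)`. -/
theorem lagrangian_dual_transform (S I σsq : ℝ) (hS : 0 ≤ S) (hI : 0 ≤ I)
    (hσ : 0 < σsq) :
    ConcaveOn ℝ (Set.Ici (0 : ℝ))
      (fun ξ => Real.log (1 + ξ) - ξ + (1 + ξ) * S / (S + I + σsq)) ∧
    (∀ ξ : ℝ, 0 ≤ ξ →
      Real.log (1 + ξ) - ξ + (1 + ξ) * S / (S + I + σsq) ≤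
      Real.log (1 + S / (I + σsq)) - S / (I + σsq) +
        (1 + S / (I + σsq)) * S / (S + I + σsq)) ∧
    (∀ ξ : ℝ, 0 ≤ ξ →
      Real.log (1 + ξ) - ξ + (1 + ξ) * S / (S + I + σsq) =
        Real.log (1 + S / (I + σsq)) - S / (I + σsq) +
          (1 + S / (I + σsq)) * S / (S + I + σsq) →
      ξ = S / (I + σsq)) ∧
    Real.log (1 + S / (I + σsq)) - S / (I + σsq) +
        (1 + S / (I + σsq)) * S / (S + I + σsq) =
      Real.log (1 + S / (I + σsq)) := by
  have hd : 0 < I + σsq := by linarith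
  have hT : 0 < S + I + σsq := by linarith
  set γ : ℝ := S / (I + σsq) with hγdef
  have hγ0 : 0 ≤ γ := div_nonneg hS hd.le
  have h1γ : 0 < 1 + γ := by linarith
  -- key algebraic identity : (1+γ)*S/T = γ
  have hkey : (1 + γ) * S / (S + I + σsq) = γ := by
    rw [hγdef]; field_simp; ring
  -- the slope identity : 1 - S/T = 1/(1+γ)
  have hslope : 1 - S / (S + I + σsq) = 1 / (1 + γ) := by
    rw [hγdef]; field_simp; ring
  -- log concavity
  have hlog : ConcaveOn ℝ (Set.Ici (0 : ℝ)) (fun ξ => Real.log (1 + ξ)) := by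
    refine ⟨convex_Ici 0, ?_⟩
    intro x hx y hy a b ha hb hab
    simp only [smul_eq_mul]
    have hx1 : (1 : ℝ) + x ∈ Set.Ioi (0 : ℝ) := by
      simp only [Set.mem_Ici] at hx; simp; linarith
    have hy1 : (1 : ℝ) + y ∈ Set.Ioi (0 : ℝ) := by
      simp only [Set.mem_Ici] at hy; simp; linarith
    have h := strictConcaveOn_log_Ioi.concaveOn.2 hx1 hy1 ha hb hab
    simp only [smul_eq_mul] at h
    have : a * (1 + x) + b * (1 + y) = 1 + (a * x + b * y) := by
      have : a + b = 1 := hab; nlinarith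
    rwa [this] at h
  have haff : ConcaveOn ℝ (Set.Ici (0 : ℝ))
      (fun ξ => -ξ + (1 + ξ) * S / (S + I + σsq)) := by
    refine ⟨convex_Ici 0, ?_⟩
    intro x hx y hy a b ha hb hab
    simp only [smul_eq_mul]
    apply le_of_eq
    have hab' : b = 1 - a := by linarith
    subst hab'
    field_simp
    ring
  refine ⟨?_, ?_, ?_, ?_⟩
  · have := hlog.add haff
    convert this using 1
    ext ξ; simp only [Pi.add_apply]; ring
    ext ξ; simp only [Pi.add_apply]; ring
  · -- maximality
    intro ξ hξ
    have h1ξ : 0 < 1 + ξ := by linarith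
    have hlogle : Real.log ((1 + ξ) / (1 + γ)) ≤ (1 + ξ) / (1 + γ) - 1 :=
      Real.log_le_sub_one_of_pos (div_pos h1ξ h1γ)
    rw [Real.log_div h1ξ.ne' h1γ.ne'] at hlogle
    have hineq : Real.log (1 + ξ) - Real.log (1 + γ) ≤ (ξ - γ) / (1 + γ) := by
      have : (1 + ξ) / (1 + γ) - 1 = (ξ - γ) / (1 + γ) := by
        field_simp
        ring
      linarith [hlogle, this ▸ hlogle]
    have hrhs : (ξ - γ) / (1 + γ) = (ξ - γ) * (1 - S / (S + I + σsq)) := by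
      rw [hslope]; ring
    have e1 : (1 + ξ) * S / (S + I + σsq) - (1 + γ) * S / (S + I + σsq)
        = (ξ - γ) * (S / (S + I + σsq)) := by ring
    have e2 : (ξ - γ) * (1 - S / (S + I + σsq))
        = (ξ - γ) - (ξ - γ) * (S / (S + I + σsq)) := by ring
    linarith [hrhs ▸ hineq]
  · -- uniqueness
    intro ξ hξ heq
    have h1ξ : 0 < 1 + ξ := by linarith
    by_contra hne
    have hx1 : (1 + ξ) / (1 + γ) ≠ 1 := by
      intro h
      apply hne
      field_simp at h
      linarith
    have hlt : Real.log ((1 + ξ) / (1 + γ)) < (1 + ξ) / (1 + γ) - 1 :=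
      Real.log_lt_sub_one_of_pos (div_pos h1ξ h1γ) hx1
    rw [Real.log_div h1ξ.ne' h1γ.ne'] at hlt
    have h2 : (1 + ξ) / (1 + γ) - 1 = (ξ - γ) / (1 + γ) := by field_simp; ring
    rw [h2] at hlt
    have hrhs : (ξ - γ) / (1 + γ) = (ξ - γ) * (1 - S / (S + I + σsq)) := by
      rw [hslope]; ring
    rw [hrhs] at hlt
    have e1 : (1 + ξ) * S / (S + I + σsq) - (1 + γ) * S / (S + I + σsq)
        = (ξ - γ) * (S / (S + I + σsq)) := by ring
    have e2 : (ξ - γ) * (1 - S / (S + I + σsq))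
        = (ξ - γ) - (ξ - γ) * (S / (S + I + σsq)) := by ring
    linarith [hlt]
  · rw [hkey]; ring
end
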